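/- For every n ≥ 1 and for γ = (0,0,…,0) ∈ {0,1}ⁿ (all variables of even degree), one has dim_F V_{UT₂}(γ) = 2ⁿ + 2, where the acting subalgebra is B = UT₂ itself. -/

import Mathlib

noncomputable section

/-- The algebra of `2 × 2` matrices over `F` (ambient algebra for `UT₂`). -/
abbrev M2 (F : Type*) [Field F] := Matrix (Fin 2) (Fin 2) F

/-- The matrix unit `e₁₁`. -/
def e11 (F : Type*) [Field F] : M2 F := Matrix.single 0 0 1

/-- The matrix unit `e₁₂`. -/
def e12 (F : Type*) [Field F] : M2 F := Matrix.single 0 1 1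

/-- The matrix unit `e₂₂`. -/
def e22 (F : Type*) [Field F] : M2 F := Matrix.single 1 1 1

/-- The homogeneous components of the canonical `ℤ₂`-grading of `UT₂`:
`UT₂⁰ = F e₁₁ ⊕ F e₂₂` and `UT₂¹ = F e₁₂`. -/
def utComp (F : Type*) [Field F] (b : Bool) : Submodule F (M2 F) :=
  if b then Submodule.span F {e12 F} else Submodule.span F {e11 F, e22 F}

/-- `UT₂`, the set of `2 × 2` upper triangular matrices. -/
def UTset (F : Type*) [Field F] : Set (M2 F) := {M | M 1 0 = 0}

/-- The space `V_B(γ)`: the `F`-span of all functions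
`(x₁,…,xₙ) ↦ b₀ x_{σ(1)} b₁ x_{σ(2)} ⋯ b_{n-1} x_{σ(n)} bₙ` with `σ` a permutation and
`b₀,…,bₙ ∈ B`, defined on the homogeneous components prescribed by `γ ∈ {0,1}ⁿ`. -/
def Vspan (F : Type*) [Field F] (B : Set (M2 F)) {n : ℕ} (γ : Fin n → Bool) :
    Submodule F ((∀ i : Fin n, ↥(utComp F (γ i))) → M2 F) :=
  Submodule.span F
    {f | ∃ (σ : Equiv.Perm (Fin n)) (b : Fin (n + 1) → M2 F),
      (∀ i, b i ∈ B) ∧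
      f = fun x => b 0 * (List.ofFn fun i : Fin n => ((x (σ i) : M2 F) * b i.succ)).prod}

namespace Stmt9

variable {F : Type*} [Field F]

@[simp] lemma e11_00 : e11 F 0 0 = 1 := by simp [e11]
@[simp] lemma e11_01 : e11 F 0 1 = 0 := by simp [e11]
@[simp] lemma e11_10 : e11 F 1 0 = 0 := by simp [e11]
@[simp] lemma e11_11 : e11 F 1 1 = 0 := by simp [e11]
@[simp] lemma e12_00 : e12 F 0 0 = 0 := by simp [e12]
@[simp] lemma e12_01 : e12 F 0 1 = 1 := by simp [e12]
@[simp] lemma e12_10 : e12 F 1 0 = 0 := by simp [e12]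
@[simp] lemma e12_11 : e12 F 1 1 = 0 := by simp [e12]
@[simp] lemma e22_00 : e22 F 0 0 = 0 := by simp [e22]
@[simp] lemma e22_01 : e22 F 0 1 = 0 := by simp [e22]
@[simp] lemma e22_10 : e22 F 1 0 = 0 := by simp [e22]
@[simp] lemma e22_11 : e22 F 1 1 = 1 := by simp [e22]

lemma mul_apply2 (M N : M2 F) (i j : Fin 2) :
    (M * N) i j = M i 0 * N 0 j + M i 1 * N 1 j := by
  rw [Matrix.mul_apply, Fin.sum_univ_two]

lemma ut_decomp (M : M2 F) (h : M 1 0 = 0) :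
    M = M 0 0 • e11 F + M 0 1 • e12 F + M 1 1 • e22 F := by
  ext i j
  fin_cases i <;> fin_cases j <;>
    simp [Matrix.add_apply, Matrix.smul_apply, h, smul_eq_mul]

lemma diag_mul_e12 (M : M2 F) (h0 : M 1 0 = 0) (h1 : M 0 1 = 0) :
    M * e12 F = M 0 0 • e12 F := by
  ext i j
  fin_cases i <;> fin_cases j <;> simp [mul_apply2, h0, h1, smul_eq_mul]

lemma e12_mul_diag (M : M2 F) (h0 : M 1 0 = 0) (h1 : M 0 1 = 0) :
    e12 F * M = M 1 1 • e12 F := by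
  ext i j
  fin_cases i <;> fin_cases j <;> simp [mul_apply2, h0, h1, smul_eq_mul]

lemma e11_mul_diag (M : M2 F) (h0 : M 1 0 = 0) (h1 : M 0 1 = 0) :
    e11 F * M = M 0 0 • e11 F := by
  ext i j
  fin_cases i <;> fin_cases j <;> simp [mul_apply2, h0, h1, smul_eq_mul]

lemma e22_mul_diag (M : M2 F) (h0 : M 1 0 = 0) (h1 : M 0 1 = 0) :
    e22 F * M = M 1 1 • e22 F := by
  ext i j
  fin_cases i <;> fin_cases j <;> simp [mul_apply2, h0, h1, smul_eq_mul]

/-! ### Entry formulas for products of upper triangular matrices -/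

lemma list_prod_10 (L : List (M2 F)) (h : ∀ M ∈ L, M 1 0 = 0) : L.prod 1 0 = 0 := by
  induction L with
  | nil => simp [Matrix.one_apply]
  | cons M L ih =>
      rw [List.prod_cons, mul_apply2]
      rw [h M (by simp), ih (fun N hN => h N (by simp [hN]))]
      ring

lemma list_prod_00 (L : List (M2 F)) (h : ∀ M ∈ L, M 1 0 = 0) :
    L.prod 0 0 = (L.map (fun M => M 0 0)).prod := by
  induction L with
  | nil => simp [Matrix.one_apply]
  | cons M L ih =>
      rw [List.prod_cons, mul_apply2, list_prod_10 L (fun N hN => h N (by simp [hN])),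
        ih (fun N hN => h N (by simp [hN]))]
      simp

lemma list_prod_11 (L : List (M2 F)) (h : ∀ M ∈ L, M 1 0 = 0) :
    L.prod 1 1 = (L.map (fun M => M 1 1)).prod := by
  induction L with
  | nil => simp [Matrix.one_apply]
  | cons M L ih =>
      rw [List.prod_cons, mul_apply2, h M (by simp),
        ih (fun N hN => h N (by simp [hN]))]
      simp

lemma list_prod_01 (L : List (M2 F)) (h : ∀ M ∈ L, M 1 0 = 0 ∧ M 0 1 = 0) :
    L.prod 0 1 = 0 := by
  induction L with
  | nil => simp [Matrix.one_apply]
  | cons M L ih =>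
      rw [List.prod_cons, mul_apply2, (h M (by simp)).2,
        ih (fun N hN => h N (by simp [hN])),
        list_prod_11 L (fun N hN => (h N (by simp [hN])).1)]
      ring

/-! ### The key product computation for the lower bound -/

lemma e12_mul_diag_prod : ∀ (n : ℕ) (x : Fin n → M2 F),
    (∀ i, x i 1 0 = 0 ∧ x i 0 1 = 0) →
    e12 F * (List.ofFn x).prod = (∏ i, x i 1 1) • e12 F := by
  intro n
  induction n with
  | zero => intro x hx; simp
  | succ n ih =>
      intro x hx
      rw [List.ofFn_succ, List.prod_cons, ← mul_assoc,
        e12_mul_diag (x 0) (hx 0).1 (hx 0).2, smul_mul_assoc,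
        ih (fun i => x i.succ) (fun i => hx i.succ), smul_smul, Fin.prod_univ_succ]

lemma gen_prod : ∀ (n : ℕ) (x : Fin n → M2 F),
    (∀ i, x i 1 0 = 0 ∧ x i 0 1 = 0) → ∀ (k : ℕ), k ≤ n →
    (if k = 0 then e12 F else 1) *
      (List.ofFn fun i : Fin n => x i * (if i.val + 1 = k then e12 F else 1)).prod
    = (∏ i : Fin n, if i.val < k then x i 0 0 else x i 1 1) • e12 F := by
  intro n
  induction n with
  | zero =>
      intro x hx k hk
      interval_cases k
      simp
  | succ n ih =>
      intro x hx k hk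
      match k with
      | 0 =>
          rw [if_pos rfl]
          have h2 : (List.ofFn fun i : Fin (n+1) => x i * (if (i:ℕ) + 1 = 0 then e12 F else 1))
              = List.ofFn x := by
            congr 1
            funext i
            rw [if_neg (Nat.succ_ne_zero _), mul_one]
          rw [h2, e12_mul_diag_prod _ x hx]
          congr 1
      | 1 =>
          rw [if_neg one_ne_zero, one_mul, List.ofFn_succ, List.prod_cons,
            if_pos (by rw [Fin.val_zero]), diag_mul_e12 (x 0) (hx 0).1 (hx 0).2, smul_mul_assoc]
          have h2 : (List.ofFn fun i : Fin n => x i.succ * (if ((i.succ : Fin (n+1)):ℕ) + 1 = 1 then e12 F else 1))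
              = List.ofFn fun i : Fin n => x i.succ := by
            congr 1
            funext i
            rw [if_neg (by rw [Fin.val_succ]; omega), mul_one]
          rw [h2, e12_mul_diag_prod n (fun i => x i.succ) (fun i => hx i.succ),
            smul_smul, Fin.prod_univ_succ, if_pos (by rw [Fin.val_zero]; omega)]
          congr 1
      | (m+2) =>
          rw [if_neg (Nat.succ_ne_zero _), one_mul, List.ofFn_succ, List.prod_cons,
            if_neg (by rw [Fin.val_zero]; omega), mul_one]
          have htail : (List.ofFn fun i : Fin n => x i.succ * (if ((i.succ : Fin (n+1)):ℕ) + 1 = m + 2 then e12 F else 1))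
              = List.ofFn fun i : Fin n => x i.succ * (if (i:ℕ) + 1 = m + 1 then e12 F else 1) := by
            congr 1
            funext i
            congr 1
            simp only [Fin.val_succ]
            exact if_congr (by omega) rfl rfl
          have hIH := ih (fun i => x i.succ) (fun i => hx i.succ) (m+1) (by omega)
          rw [if_neg (Nat.succ_ne_zero _), one_mul] at hIH
          rw [htail, hIH, mul_smul_comm, diag_mul_e12 (x 0) (hx 0).1 (hx 0).2,
            smul_smul, Fin.prod_univ_succ, if_pos (by rw [Fin.val_zero]; omega)]
          congr 1
          rw [mul_comm]
          congr 1
          apply Finset.prod_congr rfl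
          intro i _
          simp only [Fin.val_succ]
          exact if_congr (by omega) rfl rfl

/-! ### A sorting permutation -/

lemma exists_perm {n : ℕ} (S : Fin n → Bool) :
    ∃ (k : ℕ) (σ : Equiv.Perm (Fin n)), k ≤ n ∧
      ∀ j : Fin n, ((σ.symm j : Fin n).val < k ↔ S j = true) := by
  classical
  set T : Finset (Fin n) := Finset.univ.filter (fun j => S j = true) with hT
  have hcompl : Tᶜ.card = n - T.card := by
    rw [Finset.card_compl, Fintype.card_fin]
  have hkn : n = T.card + (n - T.card) := by
    have := Finset.card_le_univ T
    simp only [Finset.card_univ, Fintype.card_fin] at this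
    omega
  let e₁ : Fin T.card ≃o T := T.orderIsoOfFin rfl
  let e₂ : Fin (n - T.card) ≃o ↥(Tᶜ) := Tᶜ.orderIsoOfFin hcompl
  let ec : {a // a ∈ Tᶜ} ≃ {a : Fin n // ¬ a ∈ T} :=
    Equiv.subtypeEquivRight (fun a => Finset.mem_compl)
  let σ : Equiv.Perm (Fin n) :=
    (finCongr hkn).trans (finSumFinEquiv.symm.trans
      ((Equiv.sumCongr e₁.toEquiv (e₂.toEquiv.trans ec)).trans
        (Equiv.sumCompl (fun a : Fin n => a ∈ T))))
  refine ⟨T.card, σ, by omega, ?_⟩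
  intro j
  by_cases hj : j ∈ T
  · have : σ.symm j = (finCongr hkn).symm (finSumFinEquiv (Sum.inl (e₁.symm ⟨j, hj⟩))) := by
      simp [σ, Equiv.sumCompl_symm_apply_of_pos hj]
    rw [this]
    simp only [finCongr_symm, finCongr_apply, Fin.coe_cast, finSumFinEquiv_apply_left,
      Fin.coe_castAdd]
    constructor
    · intro _
      simpa [hT] using hj
    · intro _
      exact (e₁.symm ⟨j, hj⟩).isLt
  · have : σ.symm j = (finCongr hkn).symm (finSumFinEquiv (Sum.inr (e₂.symm (ec.symm ⟨j, hj⟩)))) := by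
      simp [σ, ec, Equiv.sumCompl_symm_apply_of_neg hj]
    rw [this]
    simp only [finCongr_symm, finCongr_apply, Fin.coe_cast, finSumFinEquiv_apply_right,
      Fin.coe_natAdd]
    constructor
    · omega
    · intro hS
      exact absurd (by simpa [hT] using hS) hj

/-! ### The even component -/

/-- The distinguished elements `e11` (for `true`) and `e22` (for `false`) of the
even component. -/
def EE (F : Type*) [Field F] (t : Bool) : ↥(utComp F false) :=
  ⟨if t then e11 F else e22 F, by
    have h : utComp F false = Submodule.span F {e11 F, e22 F} := by simp [utComp]
    rw [h]
    cases t
    · exact Submodule.subset_span (by simp)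
    · exact Submodule.subset_span (by simp)⟩

@[simp] lemma EE_coe (t : Bool) : ((EE F t : ↥(utComp F false)) : M2 F)
    = if t then e11 F else e22 F := rfl

lemma D_entries (y : ↥(utComp F false)) :
    (y : M2 F) 1 0 = 0 ∧ (y : M2 F) 0 1 = 0 := by
  have h : utComp F false = Submodule.span F {e11 F, e22 F} := by simp [utComp]
  have hy : (y : M2 F) ∈ Submodule.span F {e11 F, e22 F} := by rw [← h]; exact y.2
  obtain ⟨a, b, hab⟩ := Submodule.mem_span_pair.mp hy
  constructor <;> rw [← hab] <;> simp

lemma D_decomp (y : ↥(utComp F false)) :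
    y = ((y : M2 F) 0 0) • EE F true + ((y : M2 F) 1 1) • EE F false := by
  have h : utComp F false = Submodule.span F {e11 F, e22 F} := by simp [utComp]
  have hy : (y : M2 F) ∈ Submodule.span F {e11 F, e22 F} := by rw [← h]; exact y.2
  obtain ⟨a, b, hab⟩ := Submodule.mem_span_pair.mp hy
  apply Subtype.ext
  push_cast [EE]
  have h00 : (y : M2 F) 0 0 = a := by rw [← hab]; simp
  have h11 : (y : M2 F) 1 1 = b := by rw [← hab]; simp
  rw [h00, h11, ← hab]
  simp

variable {n : ℕ}

/-- The generator, as a multilinear map. -/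
def genML (b : Fin (n+1) → M2 F) (σ : Equiv.Perm (Fin n)) :
    MultilinearMap F (fun _ : Fin n => ↥(utComp F false)) (M2 F) :=
  (LinearMap.mulLeft F (b 0)).compMultilinearMap
    (((MultilinearMap.mkPiAlgebraFin F n (M2 F)).compLinearMap
      (fun i => (LinearMap.mulRight F (b i.succ)).comp (utComp F false).subtype)).domDomCongr σ)

lemma genML_apply (b : Fin (n+1) → M2 F) (σ : Equiv.Perm (Fin n))
    (x : ∀ _ : Fin n, ↥(utComp F false)) :
    genML b σ x = b 0 * (List.ofFn fun i : Fin n => ((x (σ i) : M2 F) * b i.succ)).prod := by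
  simp [genML, LinearMap.mulLeft_apply, LinearMap.mulRight_apply]

/-- `χ_S`. -/
def chi (S : Fin n → Bool) : ∀ _ : Fin n, ↥(utComp F false) := fun i => EE F (S i)

lemma genML_expand (b : Fin (n+1) → M2 F) (σ : Equiv.Perm (Fin n))
    (x : ∀ _ : Fin n, ↥(utComp F false)) :
    genML b σ x = ∑ S : Fin n → Bool,
      (∏ i, if S i then (x i : M2 F) 0 0 else (x i : M2 F) 1 1) • genML b σ (chi S) := by
  have hx : x = fun i => ∑ t : Bool,
      (if t then (x i : M2 F) 0 0 else (x i : M2 F) 1 1) • EE F t := by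
    funext i
    rw [Fintype.sum_bool]
    simpa using D_decomp (x i)
  conv_lhs => rw [hx]
  rw [MultilinearMap.map_sum]
  apply Finset.sum_congr rfl
  intro S _
  rw [← MultilinearMap.map_smul_univ]
  rfl

/-! ### The basis family -/

/-- The spanning family: `g₁`, `g₂` and the `f_S`. -/
def bv : Bool ⊕ (Fin n → Bool) → ((∀ _ : Fin n, ↥(utComp F false)) → M2 F)
  | Sum.inl true => fun x => (∏ i, (x i : M2 F) 0 0) • e11 F
  | Sum.inl false => fun x => (∏ i, (x i : M2 F) 1 1) • e22 F
  | Sum.inr S => fun x =>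
      (∏ i, if S i then (x i : M2 F) 0 0 else (x i : M2 F) 1 1) • e12 F

lemma chi_00 (S : Fin n → Bool) (i : Fin n) :
    ((chi S i : ↥(utComp F false)) : M2 F) 0 0 = if S i then (1:F) else 0 := by
  cases h : S i <;> simp [chi, h]

lemma chi_11 (S : Fin n → Bool) (i : Fin n) :
    ((chi S i : ↥(utComp F false)) : M2 F) 1 1 = if S i then (0:F) else 1 := by
  cases h : S i <;> simp [chi, h]

lemma key_prod (S T : Fin n → Bool) :
    (∏ i, if S i then ((chi T i : ↥(utComp F false)) : M2 F) 0 0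
      else ((chi T i : ↥(utComp F false)) : M2 F) 1 1)
    = if S = T then (1:F) else 0 := by
  have h : ∀ i : Fin n, (if S i then ((chi T i : ↥(utComp F false)) : M2 F) 0 0
      else ((chi T i : ↥(utComp F false)) : M2 F) 1 1) = if S i = T i then (1:F) else 0 := by
    intro i
    cases hS : S i <;> cases hT : T i <;> simp [chi, hS, hT]
  rw [Finset.prod_congr rfl (fun i _ => h i), Finset.prod_boole]
  by_cases hST : S = T
  · subst hST; simp
  · rw [if_neg (by simpa [funext_iff] using hST), if_neg hST]

lemma bv_indep : LinearIndependent F (bv (F := F) (n := n)) := by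
  classical
  rw [Fintype.linearIndependent_iff]
  intro g hg
  have hev : ∀ (T : Fin n → Bool) (a c : Fin 2),
      ∑ idx : Bool ⊕ (Fin n → Bool), g idx * (bv (F := F) idx (chi T) a c) = 0 := by
    intro T a c
    have h1 : (∑ idx : Bool ⊕ (Fin n → Bool), g idx • bv (F := F) idx) (chi T) a c = 0 := by
      rw [hg]; rfl
    rw [Finset.sum_apply] at h1
    simpa [Matrix.sum_apply, smul_eq_mul] using h1
  have hinr : ∀ T, g (Sum.inr T) = 0 := by
    intro T
    have h := hev T 0 1
    rw [Fintype.sum_sum_type] at h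
    have hz : ∀ t : Bool, g (Sum.inl t) * (bv (Sum.inl t) (chi T) 0 1) = 0 := by
      intro t; cases t <;> simp [bv]
    rw [Finset.sum_congr rfl (fun t _ => hz t)] at h
    simp only [Finset.sum_const_zero, zero_add] at h
    have hw : ∀ S : Fin n → Bool, g (Sum.inr S) * (bv (Sum.inr S) (chi T) 0 1)
        = if S = T then g (Sum.inr S) else 0 := by
      intro S
      simp only [bv, Matrix.smul_apply, e12_01, smul_eq_mul, mul_one, key_prod]
      by_cases hST : S = T <;> simp [hST]
    rw [Finset.sum_congr rfl (fun S _ => hw S)] at h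
    rwa [Finset.sum_ite_eq' Finset.univ T (fun S => g (Sum.inr S)), if_pos (Finset.mem_univ T)] at h
  intro idx
  match idx with
  | Sum.inr T => exact hinr T
  | Sum.inl true =>
      have h := hev (fun _ => true) 0 0
      rw [Fintype.sum_sum_type] at h
      have hz : ∀ S : Fin n → Bool,
          g (Sum.inr S) * (bv (Sum.inr S) (chi (fun _ => true)) 0 0) = 0 := by
        intro S; simp [bv]
      rw [Finset.sum_congr rfl (fun S _ => hz S)] at h
      simp only [Finset.sum_const_zero, add_zero, Fintype.sum_bool] at h
      have h1 : bv (F := F) (Sum.inl true) (chi (fun _ : Fin n => true)) 0 0 = 1 := by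
        simp [bv, chi_00]
      have h2 : bv (F := F) (Sum.inl false) (chi (fun _ : Fin n => true)) 0 0 = 0 := by
        simp [bv]
      rw [h1, h2] at h
      simpa using h
  | Sum.inl false =>
      have h := hev (fun _ => false) 1 1
      rw [Fintype.sum_sum_type] at h
      have hz : ∀ S : Fin n → Bool,
          g (Sum.inr S) * (bv (Sum.inr S) (chi (fun _ => false)) 1 1) = 0 := by
        intro S; simp [bv]
      rw [Finset.sum_congr rfl (fun S _ => hz S)] at h
      simp only [Finset.sum_const_zero, add_zero, Fintype.sum_bool] at h
      have h1 : bv (F := F) (Sum.inl false) (chi (fun _ : Fin n => false)) 1 1 = 1 := by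
        simp [bv, chi_11]
      have h2 : bv (F := F) (Sum.inl true) (chi (fun _ : Fin n => false)) 1 1 = 0 := by
        simp [bv]
      rw [h1, h2] at h
      simpa using h


/-! ### Entry computations for generators -/

lemma hUTlist (b : Fin (n+1) → M2 F) (hb : ∀ i, b i ∈ UTset F) (σ : Equiv.Perm (Fin n))
    (x : ∀ _ : Fin n, ↥(utComp F false)) :
    ∀ M ∈ (b 0 :: List.ofFn fun i : Fin n => ((x (σ i) : M2 F) * b i.succ)), M 1 0 = 0 := by
  intro M hM
  rcases List.mem_cons.mp hM with h | h
  · rw [h]; exact hb 0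
  · obtain ⟨i, hi⟩ := List.mem_ofFn.mp h
    rw [← hi, mul_apply2, (D_entries (x (σ i))).1, hb i.succ]
    ring

lemma genML_10 (b : Fin (n+1) → M2 F) (hb : ∀ i, b i ∈ UTset F) (σ : Equiv.Perm (Fin n))
    (x : ∀ _ : Fin n, ↥(utComp F false)) :
    genML b σ x 1 0 = 0 := by
  rw [genML_apply, ← List.prod_cons]
  exact list_prod_10 _ (hUTlist b hb σ x)

lemma genML_chi_00 (b : Fin (n+1) → M2 F) (hb : ∀ i, b i ∈ UTset F) (σ : Equiv.Perm (Fin n))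
    (S : Fin n → Bool) (i0 : Fin n) (h0 : S i0 = false) :
    genML b σ (chi S) 0 0 = 0 := by
  rw [genML_apply, ← List.prod_cons, list_prod_00 _ (hUTlist b hb σ (chi S)),
    List.map_cons, List.prod_cons, List.map_ofFn, List.prod_ofFn]
  rw [Finset.prod_eq_zero (Finset.mem_univ (σ.symm i0)) (by
    simp only [Function.comp_apply]
    rw [mul_apply2, Equiv.apply_symm_apply, chi_00, h0, (D_entries (chi S i0)).2]
    simp), mul_zero]

lemma genML_chi_11 (b : Fin (n+1) → M2 F) (hb : ∀ i, b i ∈ UTset F) (σ : Equiv.Perm (Fin n))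
    (S : Fin n → Bool) (i0 : Fin n) (h0 : S i0 = true) :
    genML b σ (chi S) 1 1 = 0 := by
  rw [genML_apply, ← List.prod_cons, list_prod_11 _ (hUTlist b hb σ (chi S)),
    List.map_cons, List.prod_cons, List.map_ofFn, List.prod_ofFn]
  rw [Finset.prod_eq_zero (Finset.mem_univ (σ.symm i0)) (by
    simp only [Function.comp_apply]
    rw [mul_apply2, Equiv.apply_symm_apply, chi_11, h0, (D_entries (chi S i0)).1]
    simp), mul_zero]

/-! ### Upper bound -/

lemma vspan_le :
    Vspan F (UTset F) (fun _ : Fin n => false)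
      ≤ Submodule.span F (Set.range (bv (F := F) (n := n))) := by
  classical
  rw [Vspan, Submodule.span_le]
  rintro f ⟨σ, b, hb, rfl⟩
  have hfun : (fun x => b 0 *
        (List.ofFn fun i : Fin n => ((x (σ i) : M2 F) * b i.succ)).prod)
      = ∑ S : Fin n → Bool, (fun x : ∀ _ : Fin n, ↥(utComp F false) =>
          (∏ i, if S i then (x i : M2 F) 0 0 else (x i : M2 F) 1 1) • genML b σ (chi S)) := by
    funext x
    rw [Finset.sum_apply, ← genML_apply, genML_expand]
  rw [hfun]
  apply Submodule.sum_mem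
  intro S _
  set u : M2 F := genML b σ (chi S) with hu
  have hdec := ut_decomp u (genML_10 b hb σ (chi S))
  have hsplit : (fun x : ∀ _ : Fin n, ↥(utComp F false) =>
        (∏ i, if S i then (x i : M2 F) 0 0 else (x i : M2 F) 1 1) • u)
      = u 0 0 • (fun x : ∀ _ : Fin n, ↥(utComp F false) =>
          (∏ i, if S i then (x i : M2 F) 0 0 else (x i : M2 F) 1 1) • e11 F)
        + u 0 1 • (fun x : ∀ _ : Fin n, ↥(utComp F false) =>
          (∏ i, if S i then (x i : M2 F) 0 0 else (x i : M2 F) 1 1) • e12 F)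
        + u 1 1 • (fun x : ∀ _ : Fin n, ↥(utComp F false) =>
          (∏ i, if S i then (x i : M2 F) 0 0 else (x i : M2 F) 1 1) • e22 F) := by
    funext x
    simp only [Pi.add_apply, Pi.smul_apply]
    conv_lhs => rw [hdec]
    rw [smul_add, smul_add, smul_comm _ (u 0 0) (e11 F), smul_comm _ (u 0 1) (e12 F),
      smul_comm _ (u 1 1) (e22 F)]
  rw [hsplit]
  refine Submodule.add_mem _ (Submodule.add_mem _ ?_ ?_) ?_
  · by_cases hall : ∀ i, S i = true
    · have heq : (fun x : ∀ _ : Fin n, ↥(utComp F false) =>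
          (∏ i, if S i then (x i : M2 F) 0 0 else (x i : M2 F) 1 1) • e11 F)
          = bv (F := F) (Sum.inl true) := by
        funext x
        simp only [bv]
        congr 1
        exact Finset.prod_congr rfl (fun i _ => if_pos (hall i))
      rw [heq]
      exact Submodule.smul_mem _ _ (Submodule.subset_span ⟨Sum.inl true, rfl⟩)
    · push_neg at hall
      obtain ⟨i0, h0⟩ := hall
      have h0' : S i0 = false := by
        cases h : S i0
        · rfl
        · exact absurd h h0
      rw [show u 0 0 = 0 from genML_chi_00 b hb σ S i0 h0', zero_smul]
      exact Submodule.zero_mem _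
  · have heq : (fun x : ∀ _ : Fin n, ↥(utComp F false) =>
        (∏ i, if S i then (x i : M2 F) 0 0 else (x i : M2 F) 1 1) • e12 F)
        = bv (F := F) (Sum.inr S) := rfl
    rw [heq]
    exact Submodule.smul_mem _ _ (Submodule.subset_span ⟨Sum.inr S, rfl⟩)
  · by_cases hall : ∀ i, S i = false
    · have heq : (fun x : ∀ _ : Fin n, ↥(utComp F false) =>
          (∏ i, if S i then (x i : M2 F) 0 0 else (x i : M2 F) 1 1) • e22 F)
          = bv (F := F) (Sum.inl false) := by
        funext x
        simp only [bv]
        congr 1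
        refine Finset.prod_congr rfl (fun i _ => ?_)
        rw [if_neg (by rw [hall i]; exact Bool.false_ne_true)]
      rw [heq]
      exact Submodule.smul_mem _ _ (Submodule.subset_span ⟨Sum.inl false, rfl⟩)
    · push_neg at hall
      obtain ⟨i0, h0⟩ := hall
      have h0' : S i0 = true := by
        cases h : S i0
        · exact absurd h h0
        · rfl
      rw [show u 1 1 = 0 from genML_chi_11 b hb σ S i0 h0', zero_smul]
      exact Submodule.zero_mem _

/-! ### Lower bound -/

lemma bv_mem (idx : Bool ⊕ (Fin n → Bool)) :
    bv (F := F) (n := n) idx ∈ Vspan F (UTset F) (fun _ : Fin n => false) := by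
  classical
  apply Submodule.subset_span
  match idx with
  | Sum.inl true =>
      refine ⟨Equiv.refl _, fun j => if j = 0 then e11 F else 1, ?_, ?_⟩
      · intro j
        dsimp only
        by_cases h : j = 0
        · simp only [h, if_pos rfl]
          show e11 F 1 0 = 0
          simp
        · rw [if_neg h]
          show (1 : M2 F) 1 0 = 0
          rw [Matrix.one_apply_ne (by decide)]
      · funext x
        dsimp only
        have hL : (List.ofFn fun i : Fin n =>
              ((x (Equiv.refl (Fin n) i) : M2 F) * (if i.succ = (0 : Fin (n+1)) then e11 F else 1)))
            = List.ofFn (fun i : Fin n => (x i : M2 F)) := by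
          congr 1
          funext i
          rw [if_neg (Fin.succ_ne_zero i), mul_one]
          rfl
        rw [if_pos rfl, hL]
        have hm : ∀ M ∈ List.ofFn (fun i : Fin n => (x i : M2 F)), M 1 0 = 0 ∧ M 0 1 = 0 := by
          intro M hM
          obtain ⟨i, hi⟩ := List.mem_ofFn.mp hM
          rw [← hi]
          exact D_entries (x i)
        rw [e11_mul_diag _ (list_prod_10 _ (fun M hM => (hm M hM).1)) (list_prod_01 _ hm),
          list_prod_00 _ (fun M hM => (hm M hM).1), List.map_ofFn, List.prod_ofFn]
        show (∏ i, (x i : M2 F) 0 0) • e11 F = _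
        simp [Function.comp]
  | Sum.inl false =>
      refine ⟨Equiv.refl _, fun j => if j = 0 then e22 F else 1, ?_, ?_⟩
      · intro j
        dsimp only
        by_cases h : j = 0
        · simp only [h, if_pos rfl]
          show e22 F 1 0 = 0
          simp
        · rw [if_neg h]
          show (1 : M2 F) 1 0 = 0
          rw [Matrix.one_apply_ne (by decide)]
      · funext x
        dsimp only
        have hL : (List.ofFn fun i : Fin n =>
              ((x (Equiv.refl (Fin n) i) : M2 F) * (if i.succ = (0 : Fin (n+1)) then e22 F else 1)))
            = List.ofFn (fun i : Fin n => (x i : M2 F)) := by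
          congr 1
          funext i
          rw [if_neg (Fin.succ_ne_zero i), mul_one]
          rfl
        rw [if_pos rfl, hL]
        have hm : ∀ M ∈ List.ofFn (fun i : Fin n => (x i : M2 F)), M 1 0 = 0 ∧ M 0 1 = 0 := by
          intro M hM
          obtain ⟨i, hi⟩ := List.mem_ofFn.mp hM
          rw [← hi]
          exact D_entries (x i)
        rw [e22_mul_diag _ (list_prod_10 _ (fun M hM => (hm M hM).1)) (list_prod_01 _ hm),
          list_prod_11 _ (fun M hM => (hm M hM).1), List.map_ofFn, List.prod_ofFn]
        show (∏ i, (x i : M2 F) 1 1) • e22 F = _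
        simp [Function.comp]
  | Sum.inr S =>
      obtain ⟨k, σ, hk, hσ⟩ := exists_perm S
      refine ⟨σ, fun j => if (j : ℕ) = k then e12 F else 1, ?_, ?_⟩
      · intro j
        dsimp only
        by_cases h : (j : ℕ) = k
        · rw [if_pos h]
          show e12 F 1 0 = 0
          simp
        · rw [if_neg h]
          show (1 : M2 F) 1 0 = 0
          rw [Matrix.one_apply_ne (by decide)]
      · funext x
        dsimp only
        have hb0 : (if (((0 : Fin (n+1))) : ℕ) = k then e12 F else 1)
            = (if k = 0 then e12 F else 1) := by
          rw [Fin.val_zero]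
          exact if_congr eq_comm rfl rfl
        have hfac : (List.ofFn fun i : Fin n =>
              ((x (σ i) : M2 F) * (if ((i.succ : Fin (n+1)) : ℕ) = k then e12 F else 1)))
            = List.ofFn fun i : Fin n =>
              ((x (σ i) : M2 F) * (if (i : ℕ) + 1 = k then e12 F else 1)) := by
          rfl
        rw [hb0, hfac, gen_prod n (fun i => (x (σ i) : M2 F)) (fun i => D_entries _) k hk]
        show (∏ i, if S i then (x i : M2 F) 0 0 else (x i : M2 F) 1 1) • e12 F = _
        congr 1
        calc ∏ j, (if S j then (x j : M2 F) 0 0 else (x j : M2 F) 1 1)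
            = ∏ j, (if ((σ.symm j : Fin n) : ℕ) < k
                then (x j : M2 F) 0 0 else (x j : M2 F) 1 1) :=
              Finset.prod_congr rfl (fun j _ => if_congr (hσ j).symm rfl rfl)
          _ = ∏ i, (if ((σ.symm (σ i) : Fin n) : ℕ) < k
                then (x (σ i) : M2 F) 0 0 else (x (σ i) : M2 F) 1 1) :=
              (Equiv.prod_comp σ (fun j => if ((σ.symm j : Fin n) : ℕ) < k
                then (x j : M2 F) 0 0 else (x j : M2 F) 1 1)).symm
          _ = ∏ i, (if ((i : Fin n) : ℕ) < k
                then (x (σ i) : M2 F) 0 0 else (x (σ i) : M2 F) 1 1) := by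
              refine Finset.prod_congr rfl (fun i _ => ?_)
              rw [Equiv.symm_apply_apply]

end Stmt9

/-- For every `n ≥ 1` and `γ = (0,…,0)` (all variables even), with the
acting subalgebra `B = UT₂` itself, `dim V_{UT₂}(γ) = 2ⁿ + 2`. -/
theorem stmt9 (F : Type*) [Field F] [CharZero F] (n : ℕ) (hn : 1 ≤ n) :
    Module.finrank F ↥(Vspan F (UTset F) (fun _ : Fin n => false)) = 2 ^ n + 2 := by
  classical
  have heq : Vspan F (UTset F) (fun _ : Fin n => false)
      = Submodule.span F (Set.range (Stmt9.bv (F := F) (n := n))) := by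
    refine le_antisymm Stmt9.vspan_le ?_
    rw [Submodule.span_le]
    rintro f ⟨idx, rfl⟩
    exact Stmt9.bv_mem idx
  have h2 := finrank_span_eq_card (R := F)
    (M := (∀ _ : Fin n, ↥(utComp F false)) → M2 F) Stmt9.bv_indep
  rw [heq, h2]
  simp only [Fintype.card_sum, Fintype.card_bool, Fintype.card_fun, Fintype.card_fin]
  rw [add_comm]
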